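/- Fix n ≥ 3, set γ := 2 − 2/n, let α ∈ (0, γ − 1), and let h(t) := (1 − t²)^{−α} for |t| < 1. Let X := ℝ^{n−1} × (−1, 1) ⊆ ℝⁿ and u(x', x_n) := |x'|^γ h(x_n). Then: (a) at every point (x', x_n) ∈ X with x' ≠ 0, u is differentiable with ∇u(x', x_n) = ( γ |x'|^{γ−2} (1 − x_n²)^{−α} x' , 2α |x'|^γ x_n (1 − x_n²)^{−α−1} ); (b) at every point (0, x_n) with |x_n| < 1, u is differentiable with ∇u(0, x_n) = 0; (c) the restriction of ∇u to X̂ := {x ∈ X : x' ≠ 0} is a bijection from X̂ onto Ŷ := (ℝ^{n−1} \ {0}) × ℝ; consequently ∇u(X) = Ŷ ∪ {0}. -/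

import Mathlib

open MeasureTheory Set
open scoped InnerProductSpace ENNReal

/-- `h(t) = (1 − t²)^{−α}`. -/
noncomputable def hPog (α t : ℝ) : ℝ := (1 - t ^ 2) ^ (-α)

/-- The last coordinate `x_n` of `x ∈ ℝⁿ`. -/
def lastCoord (n : ℕ) (hn : 3 ≤ n) (x : EuclideanSpace ℝ (Fin n)) : ℝ :=
  x ⟨n - 1, by omega⟩

/-- The Euclidean norm `|x'|` of the first `n − 1` coordinates of `x ∈ ℝⁿ`. -/
noncomputable def primeNorm (n : ℕ) (x : EuclideanSpace ℝ (Fin n)) : ℝ :=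
  Real.sqrt (∑ i : Fin n, if (i : ℕ) = n - 1 then 0 else x i ^ 2)

/-- The Pogorelov-type function `u(x', x_n) = |x'|^γ h(x_n)` with `γ = 2 − 2/n`. -/
noncomputable def uPog (n : ℕ) (hn : 3 ≤ n) (α : ℝ) (x : EuclideanSpace ℝ (Fin n)) : ℝ :=
  primeNorm n x ^ (2 - 2 / (n : ℝ)) * hPog α (lastCoord n hn x)

/-- The slab `X = ℝ^{n−1} × (−1, 1)`. -/
def XPog (n : ℕ) (hn : 3 ≤ n) : Set (EuclideanSpace ℝ (Fin n)) :=
  {x | lastCoord n hn x ∈ Set.Ioo (-1 : ℝ) 1}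

/-- The explicit gradient
`∇u(x', x_n) = (γ |x'|^{γ−2} (1 − x_n²)^{−α} x', 2α |x'|^γ x_n (1 − x_n²)^{−α−1})`. -/
noncomputable def gradPog (n : ℕ) (hn : 3 ≤ n) (α : ℝ) (x : EuclideanSpace ℝ (Fin n)) :
    EuclideanSpace ℝ (Fin n) :=
  WithLp.toLp 2 fun i =>
    if (i : ℕ) = n - 1 then
      2 * α * primeNorm n x ^ (2 - 2 / (n : ℝ)) * lastCoord n hn x *
        (1 - lastCoord n hn x ^ 2) ^ (-(α + 1))
    else
      (2 - 2 / (n : ℝ)) * primeNorm n x ^ ((2 - 2 / (n : ℝ)) - 2) *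
        (1 - lastCoord n hn x ^ 2) ^ (-α) * x i

open Filter Topology

lemma phi_mono {β : ℝ} (hβ : 0 < β) :
    StrictMonoOn (fun t : ℝ => t * (1 - t ^ 2) ^ (-β)) (Ioo (-1 : ℝ) 1) := by
  have key : ∀ a b : ℝ, a ∈ Ioo (-1:ℝ) 1 → b ∈ Ioo (-1:ℝ) 1 → 0 ≤ a → a < b →
      a * (1 - a ^ 2) ^ (-β) < b * (1 - b ^ 2) ^ (-β) := by
    intro a b ha hb ha0 hab
    have hb2 : (0:ℝ) < 1 - b ^ 2 := by nlinarith [hb.1, hb.2]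
    have h1 : (1 - a ^ 2) ^ (-β) ≤ (1 - b ^ 2) ^ (-β) :=
      Real.rpow_le_rpow_of_nonpos hb2 (by nlinarith) (by linarith)
    have h2 : (0:ℝ) < (1 - b ^ 2) ^ (-β) := Real.rpow_pos_of_pos hb2 _
    calc a * (1 - a ^ 2) ^ (-β) ≤ a * (1 - b ^ 2) ^ (-β) :=
          mul_le_mul_of_nonneg_left h1 ha0
      _ < b * (1 - b ^ 2) ^ (-β) := mul_lt_mul_of_pos_right hab h2
  intro a ha b hb hab
  show a * (1 - a ^ 2) ^ (-β) < b * (1 - b ^ 2) ^ (-β)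
  rcases le_or_gt 0 a with ha0 | ha0
  · exact key a b ha hb ha0 hab
  rcases le_or_gt b 0 with hb0 | hb0
  · have h := key (-b) (-a) ⟨by linarith [hb.2], by linarith [hb.1]⟩
      ⟨by linarith [ha.2], by linarith [ha.1]⟩ (by linarith) (by linarith)
    rw [neg_sq, neg_sq] at h
    nlinarith [h]
  · have h1 : a * (1 - a ^ 2) ^ (-β) < 0 :=
      mul_neg_of_neg_of_pos ha0 (Real.rpow_pos_of_pos (by nlinarith [ha.1, ha.2]) _)
    have h2 : 0 < b * (1 - b ^ 2) ^ (-β) :=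
      mul_pos hb0 (Real.rpow_pos_of_pos (by nlinarith [hb.1, hb.2]) _)
    linarith

lemma phi_cont {β : ℝ} : ContinuousOn (fun t : ℝ => t * (1 - t ^ 2) ^ (-β)) (Ioo (-1:ℝ) 1) := by
  apply ContinuousOn.mul continuousOn_id
  apply ContinuousOn.rpow_const (by fun_prop)
  intro t ht
  exact Or.inl (by nlinarith [ht.1, ht.2] : (1:ℝ) - t ^ 2 ≠ 0)

lemma mem_Ioo_eventually {a : ℝ} (ha : a < 1) :
    ∀ᶠ t in 𝓝[<] (1:ℝ), t ∈ Ioo a 1 :=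
  eventually_of_mem (Ioo_mem_nhdsLT_of_mem ⟨ha, le_refl 1⟩) (fun _ ht => ht)

lemma phi_atTop {β : ℝ} (hβ : 0 < β) :
    Tendsto (fun t : ℝ => t * (1 - t ^ 2) ^ (-β)) (𝓝[<] (1:ℝ)) atTop := by
  have hIoo : ∀ᶠ t in 𝓝[<] (1:ℝ), t ∈ Ioo (-1:ℝ) 1 :=
    mem_Ioo_eventually (by norm_num)
  have h1 : Tendsto (fun t : ℝ => (1 - t ^ 2) ^ β) (𝓝[<] (1:ℝ)) (𝓝[>] 0) := by
    rw [tendsto_nhdsWithin_iff]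
    constructor
    · have hc : Tendsto (fun t : ℝ => 1 - t ^ 2) (𝓝[<] (1:ℝ)) (𝓝 0) := by
        have : Continuous fun t : ℝ => 1 - t ^ 2 := by fun_prop
        exact (this.tendsto' 1 0 (by norm_num)).mono_left nhdsWithin_le_nhds
      have hr : ContinuousAt (fun s : ℝ => s ^ β) 0 :=
        Real.continuousAt_rpow_const 0 β (Or.inr hβ.le)
      have := hr.tendsto.comp hc
      simpa [Function.comp_def, Real.zero_rpow hβ.ne'] using this
    · filter_upwards [hIoo] with t ht
      exact Real.rpow_pos_of_pos (by nlinarith [ht.1, ht.2]) _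
  have h2 : Tendsto (fun t : ℝ => ((1 - t ^ 2) ^ β)⁻¹) (𝓝[<] (1:ℝ)) atTop :=
    tendsto_inv_nhdsGT_zero.comp h1
  have h3 : Tendsto (fun t : ℝ => (1 - t ^ 2) ^ (-β)) (𝓝[<] (1:ℝ)) atTop := by
    apply h2.congr'
    filter_upwards [hIoo] with t ht
    rw [Real.rpow_neg (by nlinarith [ht.1, ht.2])]
  have h4 : Tendsto (fun t : ℝ => (1/2 : ℝ) * (1 - t ^ 2) ^ (-β)) (𝓝[<] (1:ℝ)) atTop :=
    h3.const_mul_atTop (by norm_num)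
  apply tendsto_atTop_mono' _ _ h4
  filter_upwards [hIoo, mem_Ioo_eventually (show (1/2:ℝ) < 1 by norm_num)] with t ht
    (ht2 : t ∈ Ioo (1/2 : ℝ) 1)
  have : (0:ℝ) < (1 - t ^ 2) ^ (-β) := Real.rpow_pos_of_pos (by nlinarith [ht.1, ht.2]) _
  nlinarith [ht2.1]

lemma phi_surj {β : ℝ} (hβ : 0 < β) (b : ℝ) :
    ∃ t ∈ Ioo (-1:ℝ) 1, t * (1 - t ^ 2) ^ (-β) = b := by
  have key : ∀ b : ℝ, 0 ≤ b → ∃ t ∈ Ioo (-1:ℝ) 1, t * (1 - t ^ 2) ^ (-β) = b := by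
    intro b hb
    obtain ⟨t₂, ht₂, hft₂⟩ : ∃ t₂ ∈ Ioo (0:ℝ) 1, b < t₂ * (1 - t₂ ^ 2) ^ (-β) := by
      have h1 := (phi_atTop hβ).eventually_gt_atTop b
      have h2 : ∀ᶠ t in 𝓝[<] (1:ℝ), t ∈ Ioo (0:ℝ) 1 :=
        mem_Ioo_eventually (by norm_num)
      rcases (h1.and h2).exists with ⟨t, h, h'⟩
      exact ⟨t, h', h⟩
    have hsub : Icc (0:ℝ) t₂ ⊆ Ioo (-1:ℝ) 1 := fun s hs =>
      ⟨by linarith [hs.1], lt_of_le_of_lt hs.2 ht₂.2⟩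
    have hcont : ContinuousOn (fun t : ℝ => t * (1 - t ^ 2) ^ (-β)) (Icc 0 t₂) :=
      phi_cont.mono hsub
    have hIVT := intermediate_value_Icc (le_of_lt ht₂.1) hcont
    have hmem : b ∈ Icc ((fun t : ℝ => t * (1 - t ^ 2) ^ (-β)) 0)
        ((fun t : ℝ => t * (1 - t ^ 2) ^ (-β)) t₂) := ⟨by simpa using hb, le_of_lt hft₂⟩
    rcases hIVT hmem with ⟨t, ht, hft⟩
    exact ⟨t, hsub ht, hft⟩
  rcases le_or_gt 0 b with hb | hb
  · exact key b hb
  · rcases key (-b) (by linarith) with ⟨t, ht, hft⟩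
    refine ⟨-t, ⟨by linarith [ht.2], by linarith [ht.1]⟩, ?_⟩
    rw [neg_sq]
    linarith

lemma solve_unique' {γ α : ℝ} (hγ : 1 < γ) (hα0 : 0 < α) (hα1 : α < γ - 1)
    {s : ℝ} (hs : 0 < s) (b : ℝ) :
    ∃! p : ℝ × ℝ, (0 < p.1 ∧ p.2 ∈ Ioo (-1:ℝ) 1) ∧
      γ * p.1 ^ (γ - 1) * (1 - p.2 ^ 2) ^ (-α) = s ∧
      2 * α * p.1 ^ γ * p.2 * (1 - p.2 ^ 2) ^ (-(α + 1)) = b := by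
  have hγ0 : (0:ℝ) < γ := by linarith
  have hγ1 : γ - 1 ≠ 0 := by intro h; linarith [sub_eq_zero.mp h]
  have hsγ : (0:ℝ) < s / γ := div_pos hs hγ0
  set K : ℝ := (s / γ) ^ ((γ - 1)⁻¹) with hK
  have hKpos : 0 < K := Real.rpow_pos_of_pos hsγ _
  set β : ℝ := (γ - 1 - α) / (γ - 1) with hβdef
  have hβ : 0 < β := div_pos (by linarith) (by linarith)
  set C : ℝ := 2 * α * (s / γ) ^ (γ / (γ - 1)) with hC
  have hCpos : 0 < C := mul_pos (by linarith) (Real.rpow_pos_of_pos hsγ _)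
  have e1_iff : ∀ r t : ℝ, 0 < r → t ∈ Ioo (-1:ℝ) 1 →
      (γ * r ^ (γ - 1) * (1 - t ^ 2) ^ (-α) = s ↔
        r = K * (1 - t ^ 2) ^ (α / (γ - 1))) := by
    intro r t hr ht
    have hm : (0:ℝ) < 1 - t ^ 2 := by nlinarith [ht.1, ht.2]
    have key : (1 - t ^ 2) ^ (-α) * (1 - t ^ 2) ^ α = 1 := by
      rw [← Real.rpow_add hm]; simp
    have key2 : (1 - t ^ 2) ^ α * (1 - t ^ 2) ^ (-α) = 1 := by
      rw [← Real.rpow_add hm]; simp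
    constructor
    · intro h
      have h2 : r ^ (γ - 1) = s / γ * (1 - t ^ 2) ^ α := by
        rw [div_mul_eq_mul_div, eq_div_iff hγ0.ne']
        linear_combination (1 - t ^ 2) ^ α * h - γ * r ^ (γ - 1) * key
      have h3 : r = (s / γ * (1 - t ^ 2) ^ α) ^ ((γ - 1)⁻¹) := by
        rw [← h2, Real.rpow_rpow_inv hr.le hγ1]
      rw [h3, Real.mul_rpow hsγ.le (Real.rpow_nonneg hm.le _),
        ← Real.rpow_mul hm.le, hK]
      ring_nf
    · intro h
      have h1 : r ^ (γ - 1) = s / γ * (1 - t ^ 2) ^ α := by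
        rw [h, Real.mul_rpow hKpos.le (Real.rpow_nonneg hm.le _), hK,
          Real.rpow_inv_rpow hsγ.le hγ1, ← Real.rpow_mul hm.le,
          div_mul_cancel₀ _ hγ1]
      have hx : γ * (s / γ * (1 - t ^ 2) ^ α) * (1 - t ^ 2) ^ (-α)
          = s * ((1 - t ^ 2) ^ α * (1 - t ^ 2) ^ (-α)) := by
        field_simp
      rw [h1, hx, key2, mul_one]
  have e2_eq : ∀ t : ℝ, t ∈ Ioo (-1:ℝ) 1 →
      2 * α * (K * (1 - t ^ 2) ^ (α / (γ - 1))) ^ γ * t * (1 - t ^ 2) ^ (-(α + 1))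
        = C * (t * (1 - t ^ 2) ^ (-β)) := by
    intro t ht
    have hm : (0:ℝ) < 1 - t ^ 2 := by nlinarith [ht.1, ht.2]
    have h1 : (K * (1 - t ^ 2) ^ (α / (γ - 1))) ^ γ
        = (s / γ) ^ (γ / (γ - 1)) * (1 - t ^ 2) ^ (α / (γ - 1) * γ) := by
      rw [Real.mul_rpow hKpos.le (Real.rpow_nonneg hm.le _), hK,
        ← Real.rpow_mul hsγ.le, ← Real.rpow_mul hm.le, inv_mul_eq_div]
    have h2 : (1 - t ^ 2) ^ (α / (γ - 1) * γ) * (1 - t ^ 2) ^ (-(α + 1))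
        = (1 - t ^ 2) ^ (-β) := by
      rw [← Real.rpow_add hm]
      congr 1
      rw [hβdef]
      field_simp
      ring
    rw [h1, hC]
    linear_combination (2 * α * (s / γ) ^ (γ / (γ - 1)) * t) * h2
  obtain ⟨t, ht, hφt⟩ := phi_surj hβ (b / C)
  set r : ℝ := K * (1 - t ^ 2) ^ (α / (γ - 1)) with hr
  have hm : (0:ℝ) < 1 - t ^ 2 := by nlinarith [ht.1, ht.2]
  have hrpos : 0 < r := mul_pos hKpos (Real.rpow_pos_of_pos hm _)
  refine ⟨(r, t), ⟨⟨hrpos, ht⟩, (e1_iff r t hrpos ht).mpr hr, ?_⟩, ?_⟩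
  · show 2 * α * r ^ γ * t * (1 - t ^ 2) ^ (-(α + 1)) = b
    rw [hr, e2_eq t ht, hφt, mul_div_cancel₀ _ hCpos.ne']
  · rintro ⟨r', t'⟩ ⟨⟨hr'pos, ht'⟩, h1', h2'⟩
    have hr'eq : r' = K * (1 - t' ^ 2) ^ (α / (γ - 1)) :=
      (e1_iff r' t' hr'pos ht').mp h1'
    rw [hr'eq, e2_eq t' ht'] at h2'
    have hz : t' * (1 - t' ^ 2) ^ (-β) = b / C := by
      rw [eq_div_iff hCpos.ne']; linarith [h2']
    have ht'eq : t' = t := by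
      apply (phi_mono hβ).injOn ht' ht
      show t' * (1 - t' ^ 2) ^ (-β) = t * (1 - t ^ 2) ^ (-β)
      rw [hz, hφt]
    refine Prod.ext ?_ ht'eq
    show r' = r
    rw [hr'eq, ht'eq, ← hr]


noncomputable def qPog (n : ℕ) (x : EuclideanSpace ℝ (Fin n)) : ℝ :=
  ∑ i : Fin n, if (i : ℕ) = n - 1 then 0 else x i ^ 2

lemma qPog_nonneg (n : ℕ) (x : EuclideanSpace ℝ (Fin n)) : 0 ≤ qPog n x :=
  Finset.sum_nonneg fun i _ => by split <;> positivity

lemma primeNorm_sqrt (n : ℕ) (x : EuclideanSpace ℝ (Fin n)) :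
    primeNorm n x = Real.sqrt (qPog n x) := rfl

lemma primeNorm_nonneg (n : ℕ) (x : EuclideanSpace ℝ (Fin n)) : 0 ≤ primeNorm n x :=
  Real.sqrt_nonneg _

lemma primeNorm_rpow (n : ℕ) (x : EuclideanSpace ℝ (Fin n)) (p : ℝ) :
    primeNorm n x ^ p = qPog n x ^ (p / 2) := by
  rw [primeNorm_sqrt, Real.sqrt_eq_rpow, ← Real.rpow_mul (qPog_nonneg n x)]
  congr 1
  ring

lemma qPog_pos (n : ℕ) (x : EuclideanSpace ℝ (Fin n)) (hx : primeNorm n x ≠ 0) :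
    0 < qPog n x := by
  rcases lt_or_eq_of_le (qPog_nonneg n x) with h | h
  · exact h
  · exact absurd (by rw [primeNorm_sqrt, ← h, Real.sqrt_zero]) hx

lemma primeNorm_eq_zero_iff (n : ℕ) (x : EuclideanSpace ℝ (Fin n)) :
    primeNorm n x = 0 ↔ ∀ i : Fin n, (i : ℕ) ≠ n - 1 → x i = 0 := by
  rw [primeNorm_sqrt, Real.sqrt_eq_zero (qPog_nonneg n x), qPog]
  rw [Finset.sum_eq_zero_iff_of_nonneg (fun i _ => by split <;> positivity)]
  constructor
  · intro h i hi
    have := h i (Finset.mem_univ i)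
    rw [if_neg hi] at this
    exact pow_eq_zero_iff (two_ne_zero) |>.mp this
  · intro h i _
    by_cases hi : (i : ℕ) = n - 1
    · rw [if_pos hi]
    · rw [if_neg hi, h i hi, zero_pow two_ne_zero]

lemma uPog_eq (n : ℕ) (hn : 3 ≤ n) (α : ℝ) (x : EuclideanSpace ℝ (Fin n)) :
    uPog n hn α x
      = qPog n x ^ ((2 - 2 / (n : ℝ)) / 2) * (1 - (x ⟨n - 1, by omega⟩) ^ 2) ^ (-α) := by
  rw [uPog, hPog, primeNorm_rpow, lastCoord]

-- part (a)
lemma grad_at (n : ℕ) (hn : 3 ≤ n) (α : ℝ) (x : EuclideanSpace ℝ (Fin n))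
    (hx : x ∈ XPog n hn) (hx' : primeNorm n x ≠ 0) :
    HasGradientAt (uPog n hn α) (gradPog n hn α x) x := by
  set γ : ℝ := 2 - 2 / (n : ℝ) with hγdef
  set N : Fin n := ⟨n - 1, by omega⟩ with hN
  set t : ℝ := x N with ht
  have hw : (0:ℝ) < 1 - t ^ 2 := by
    have h1 := hx.1; have h2 := hx.2
    simp only [lastCoord] at h1 h2
    nlinarith [h1, h2]
  have hq : 0 < qPog n x := qPog_pos n x hx'
  -- derivative of q
  have hqd : HasFDerivAt (qPog n)
      (∑ i : Fin n, if (i : ℕ) = n - 1 then (0 : EuclideanSpace ℝ (Fin n) →L[ℝ] ℝ)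
        else (2 * x i) • (EuclideanSpace.proj i : EuclideanSpace ℝ (Fin n) →L[ℝ] ℝ)) x := by
    apply HasFDerivAt.fun_sum
    intro i _
    by_cases hi : (i : ℕ) = n - 1
    · simpa [hi] using hasFDerivAt_const (0:ℝ) x
    · simp only [hi, if_neg, ite_false]
      have h0 := (EuclideanSpace.proj i : EuclideanSpace ℝ (Fin n) →L[ℝ] ℝ).hasFDerivAt (x := x)
      have := h0.mul h0
      simp only [PiLp.proj_apply] at this
      have h2 : HasFDerivAt (fun y : EuclideanSpace ℝ (Fin n) => y i ^ 2)
          ((2 * x i) • (EuclideanSpace.proj i : EuclideanSpace ℝ (Fin n) →L[ℝ] ℝ)) x := by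
        rw [two_mul, add_smul]
        exact this.congr_of_eventuallyEq (Filter.Eventually.of_forall fun y => by simp [sq])
      exact h2
  -- derivative of x ↦ q x ^ (γ/2)
  have hgd : HasFDerivAt (fun y => qPog n y ^ (γ / 2))
      ((γ / 2 * qPog n x ^ (γ / 2 - 1)) • (∑ i : Fin n, if (i : ℕ) = n - 1 then (0 : EuclideanSpace ℝ (Fin n) →L[ℝ] ℝ)
        else (2 * x i) • (EuclideanSpace.proj i : EuclideanSpace ℝ (Fin n) →L[ℝ] ℝ))) x := by
    exact (Real.hasDerivAt_rpow_const (Or.inl hq.ne')).comp_hasFDerivAt x hqd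
  -- derivative of x ↦ (1 - (x N)^2) ^ (-α)
  have hwd : HasFDerivAt (fun y : EuclideanSpace ℝ (Fin n) => 1 - (y N) ^ 2)
      ((0 : EuclideanSpace ℝ (Fin n) →L[ℝ] ℝ) - (2 * x N) • (EuclideanSpace.proj N : EuclideanSpace ℝ (Fin n) →L[ℝ] ℝ)) x := by
    have h0 := (EuclideanSpace.proj N : EuclideanSpace ℝ (Fin n) →L[ℝ] ℝ).hasFDerivAt (x := x)
    have hsq := h0.mul h0
    simp only [PiLp.proj_apply] at hsq
    have h2 : HasFDerivAt (fun y : EuclideanSpace ℝ (Fin n) => y N ^ 2)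
        ((2 * x N) • (EuclideanSpace.proj N : EuclideanSpace ℝ (Fin n) →L[ℝ] ℝ)) x := by
      rw [two_mul, add_smul]
      exact hsq.congr_of_eventuallyEq (Filter.Eventually.of_forall fun y => by simp [sq])
    exact (hasFDerivAt_const (1:ℝ) x).sub h2
  have hkd : HasFDerivAt (fun y : EuclideanSpace ℝ (Fin n) => (1 - (y N) ^ 2) ^ (-α))
      ((-α * (1 - t ^ 2) ^ (-α - 1)) • ((0 : EuclideanSpace ℝ (Fin n) →L[ℝ] ℝ) - (2 * x N) • (EuclideanSpace.proj N : EuclideanSpace ℝ (Fin n) →L[ℝ] ℝ))) x := by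
    exact (Real.hasDerivAt_rpow_const (Or.inl hw.ne')).comp_hasFDerivAt x hwd
  have hud : HasFDerivAt (uPog n hn α)
      ((qPog n x ^ (γ / 2)) • ((-α * (1 - t ^ 2) ^ (-α - 1)) • ((0 : EuclideanSpace ℝ (Fin n) →L[ℝ] ℝ) - (2 * x N) • (EuclideanSpace.proj N : EuclideanSpace ℝ (Fin n) →L[ℝ] ℝ)))
        + ((1 - t ^ 2) ^ (-α)) • ((γ / 2 * qPog n x ^ (γ / 2 - 1)) • (∑ i : Fin n, if (i : ℕ) = n - 1 then (0 : EuclideanSpace ℝ (Fin n) →L[ℝ] ℝ)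
        else (2 * x i) • (EuclideanSpace.proj i : EuclideanSpace ℝ (Fin n) →L[ℝ] ℝ)))) x := by
    have heq : uPog n hn α = fun y => qPog n y ^ (γ / 2) * (1 - (y N) ^ 2) ^ (-α) :=
      funext fun y => uPog_eq n hn α y
    rw [heq]
    exact hgd.mul hkd
  rw [hasGradientAt_iff_hasFDerivAt]
  refine hud.congr_fderiv (Eq.symm ?_)
  apply ContinuousLinearMap.ext
  intro y
  simp only [InnerProductSpace.toDual_apply_apply, PiLp.inner_apply, RCLike.inner_apply,
    starRingEnd_apply, star_trivial, ContinuousLinearMap.add_apply,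
    ContinuousLinearMap.smul_apply, ContinuousLinearMap.sub_apply,
    ContinuousLinearMap.zero_apply, ContinuousLinearMap.sum_apply,
    PiLp.proj_apply, smul_eq_mul, gradPog, PiLp.toLp_apply]
  simp only [apply_ite (fun L : EuclideanSpace ℝ (Fin n) →L[ℝ] ℝ => L y),
    ContinuousLinearMap.zero_apply, ContinuousLinearMap.smul_apply, PiLp.proj_apply,
    smul_eq_mul]
  have hlast : lastCoord n hn x = t := rfl
  have hcond : ∀ i : Fin n, ((i:ℕ) = n - 1) = (i = N) := by
    intro i
    rw [hN, Fin.ext_iff]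
  simp only [hlast, primeNorm_rpow n x, ← hγdef,
    show (γ - 2)/2 = γ/2 - 1 from by ring, show -(α+1) = -α-1 from by ring]
  set A : ℝ := 2 * α * qPog n x ^ (γ/2) * t * (1 - t^2) ^ (-α - 1) with hA
  set B : ℝ := γ * qPog n x ^ (γ/2 - 1) * (1 - t^2) ^ (-α) with hB
  have hsplit : ∀ i : Fin n,
      (if (i:ℕ) = n - 1 then A else B * x i) * y i
        = (if i = N then A * y i else 0) + (if i = N then 0 else B * x i * y i) := by
    intro i
    simp only [hcond i]
    by_cases h : i = N <;> simp [h]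
  conv_lhs => enter [2, i]; rw [mul_comm]
  calc ∑ i : Fin n, (if (i:ℕ) = n - 1 then A else B * x i) * y i
      = ∑ i : Fin n, ((if i = N then A * y i else 0) + (if i = N then 0 else B * x i * y i)) :=
        Finset.sum_congr rfl (fun i _ => hsplit i)
    _ = A * y N + ∑ i : Fin n, (if i = N then 0 else B * x i * y i) := by
        rw [Finset.sum_add_distrib, Finset.sum_ite_eq' Finset.univ N (fun i => A * y i)]
        simp
    _ = A * y N + (B / 2) * ∑ i : Fin n, (if (i:ℕ) = n - 1 then 0 else 2 * x i * y i) := by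
        rw [Finset.mul_sum]
        congr 1
        apply Finset.sum_congr rfl
        intro i _
        simp only [hcond i]
        by_cases h : i = N <;> simp [h] <;> ring
    _ = _ := by
        rw [hA, hB]
        ring

-- part (b)
lemma grad_zero_at (n : ℕ) (hn : 3 ≤ n) (α : ℝ) (hγ : 1 < 2 - 2 / (n : ℝ))
    (x : EuclideanSpace ℝ (Fin n)) (hx : x ∈ XPog n hn)
    (hx0 : ∀ i : Fin n, (i : ℕ) ≠ n - 1 → x i = 0) :
    HasGradientAt (uPog n hn α) 0 x := by
  set γ : ℝ := 2 - 2 / (n : ℝ) with hγdef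
  set N : Fin n := ⟨n - 1, by omega⟩ with hN
  have hγ0 : γ ≠ 0 := by intro h; rw [h] at hγ; norm_num at hγ
  have hγ1 : γ - 1 + 1 ≠ 0 := by
    intro h
    apply hγ0
    linarith
  have hw : (0:ℝ) < 1 - (x N) ^ 2 := by
    have h1 := hx.1; have h2 := hx.2
    simp only [lastCoord] at h1 h2
    nlinarith [h1, h2]
  have hux : uPog n hn α x = 0 := by
    rw [uPog, (primeNorm_eq_zero_iff n x).mpr hx0, Real.zero_rpow hγ0, zero_mul]
  -- (1) primeNorm y ≤ ‖y - x‖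
  have hpn : ∀ y : EuclideanSpace ℝ (Fin n), primeNorm n y ≤ ‖y - x‖ := by
    intro y
    simp only [primeNorm, EuclideanSpace.norm_eq]
    apply Real.sqrt_le_sqrt
    apply Finset.sum_le_sum
    intro i _
    by_cases hi : (i : ℕ) = n - 1
    · simp only [hi, ite_true]
      positivity
    · simp only [hi, ite_false]
      have : (y - x) i = y i - x i := rfl
      rw [this, hx0 i hi, sub_zero, Real.norm_eq_abs, sq_abs]
  rw [hasGradientAt_iff_hasFDerivAt, map_zero, hasFDerivAt_iff_isLittleO]
  simp only [ContinuousLinearMap.zero_apply, sub_zero, hux]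
  -- (2) big-O bound
  set M : ℝ := (1 - (x N) ^ 2) ^ (-α) + 1 with hM
  have hcont : ContinuousAt (fun y : EuclideanSpace ℝ (Fin n) => (1 - (y N) ^ 2) ^ (-α)) x := by
    apply ContinuousAt.rpow_const
    · exact (continuous_const.sub (((EuclideanSpace.proj N : EuclideanSpace ℝ (Fin n) →L[ℝ] ℝ).continuous.pow 2))).continuousAt
    · exact Or.inl hw.ne'
  have hev : ∀ᶠ y in nhds x, |uPog n hn α y| ≤ M * ‖y - x‖ ^ γ := by
    have h1 : ∀ᶠ y in nhds x, (1 - (y N) ^ 2) ^ (-α) < M :=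
      hcont.tendsto.eventually_lt_const (by rw [hM]; linarith)
    have h2 : ∀ᶠ y in nhds x, 0 < 1 - (y N) ^ 2 := by
      have : ContinuousAt (fun y : EuclideanSpace ℝ (Fin n) => 1 - (y N) ^ 2) x :=
        (continuous_const.sub (((EuclideanSpace.proj N : EuclideanSpace ℝ (Fin n) →L[ℝ] ℝ).continuous.pow 2))).continuousAt
      exact this.tendsto.eventually_const_lt hw
    filter_upwards [h1, h2] with y h1y h2y
    rw [uPog, hPog, abs_mul]
    have e1 : |primeNorm n y ^ γ| = primeNorm n y ^ γ :=
      abs_of_nonneg (Real.rpow_nonneg (primeNorm_nonneg n y) _)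
    have e2 : |(1 - lastCoord n hn y ^ 2) ^ (-α)| = (1 - (y N) ^ 2) ^ (-α) :=
      abs_of_nonneg (Real.rpow_nonneg (by exact h2y.le) _)
    rw [e1, e2]
    have e3 : primeNorm n y ^ γ ≤ ‖y - x‖ ^ γ :=
      Real.rpow_le_rpow (primeNorm_nonneg n y) (hpn y) (by linarith)
    have e4 : (0:ℝ) ≤ (1 - (y N) ^ 2) ^ (-α) := Real.rpow_nonneg h2y.le _
    calc primeNorm n y ^ γ * (1 - (y N) ^ 2) ^ (-α)
        ≤ ‖y - x‖ ^ γ * M := by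
          apply mul_le_mul e3 h1y.le e4 (Real.rpow_nonneg (norm_nonneg _) _)
      _ = M * ‖y - x‖ ^ γ := by ring
  -- (3) little-o
  rw [Asymptotics.isLittleO_iff]
  intro c hc
  have h3 : ∀ᶠ y in nhds x, ‖y - x‖ ^ (γ - 1) < c / (M + 1) := by
    have ht : Filter.Tendsto (fun y : EuclideanSpace ℝ (Fin n) => ‖y - x‖ ^ (γ - 1))
        (nhds x) (nhds 0) := by
      have hn0 : Filter.Tendsto (fun y : EuclideanSpace ℝ (Fin n) => ‖y - x‖) (nhds x) (nhds 0) := by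
        have : Continuous (fun y : EuclideanSpace ℝ (Fin n) => ‖y - x‖) := by fun_prop
        have h := this.tendsto x
        simpa using h
      have hr : ContinuousAt (fun s : ℝ => s ^ (γ - 1)) 0 :=
        Real.continuousAt_rpow_const 0 _ (Or.inr (by linarith))
      have := hr.tendsto.comp hn0
      simpa [Function.comp_def, Real.zero_rpow (show γ - 1 ≠ 0 by intro h; exact absurd (by linarith : γ = 1) (by intro hh; rw [hh] at hγ; norm_num at hγ))] using this
    have hMpos : (0:ℝ) < M := by
      rw [hM]; have := Real.rpow_nonneg hw.le (-α); linarith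
    exact ht.eventually_lt_const (div_pos hc (by linarith))
  have hMpos : (0:ℝ) < M := by
    rw [hM]; have := Real.rpow_nonneg hw.le (-α); linarith
  filter_upwards [hev, h3] with y h1y h2y
  have hsplit : ‖y - x‖ ^ γ = ‖y - x‖ ^ (γ - 1) * ‖y - x‖ := by
    rw [← Real.rpow_add_one' (norm_nonneg _) hγ1, sub_add_cancel]
  rw [Real.norm_eq_abs]
  calc |uPog n hn α y| ≤ M * ‖y - x‖ ^ γ := h1y
    _ = M * (‖y - x‖ ^ (γ - 1) * ‖y - x‖) := by rw [hsplit]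
    _ ≤ M * (c / (M + 1) * ‖y - x‖) := by
        apply mul_le_mul_of_nonneg_left _ hMpos.le
        exact mul_le_mul_of_nonneg_right h2y.le (norm_nonneg _)
    _ ≤ c * ‖y - x‖ := by
        rw [← mul_assoc]
        apply mul_le_mul_of_nonneg_right _ (norm_nonneg _)
        rw [mul_comm M (c / (M + 1)), div_mul_eq_mul_div,
          div_le_iff₀ (by linarith : (0:ℝ) < M + 1)]
        nlinarith [hc.le, hMpos]



lemma primeNorm_scale (n : ℕ) (c : ℝ) (x y : EuclideanSpace ℝ (Fin n))
    (h : ∀ i : Fin n, (i : ℕ) ≠ n - 1 → y i = c * x i) :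
    primeNorm n y = |c| * primeNorm n x := by
  simp only [primeNorm]
  rw [← Real.sqrt_sq_eq_abs, ← Real.sqrt_mul (sq_nonneg c)]
  congr 1
  rw [Finset.mul_sum]
  apply Finset.sum_congr rfl
  intro i _
  by_cases hi : (i : ℕ) = n - 1
  · simp [hi]
  · simp only [hi, ite_false]
    rw [h i hi]
    ring

-- gradient applied formulas
lemma gradPog_last (n : ℕ) (hn : 3 ≤ n) (α : ℝ) (x : EuclideanSpace ℝ (Fin n)) :
    gradPog n hn α x ⟨n - 1, by omega⟩
      = 2 * α * primeNorm n x ^ (2 - 2 / (n : ℝ)) * lastCoord n hn x *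
        (1 - lastCoord n hn x ^ 2) ^ (-(α + 1)) := by
  simp only [gradPog, PiLp.toLp_apply]
  rw [if_pos trivial]

lemma gradPog_other (n : ℕ) (hn : 3 ≤ n) (α : ℝ) (x : EuclideanSpace ℝ (Fin n))
    (i : Fin n) (hi : (i : ℕ) ≠ n - 1) :
    gradPog n hn α x i
      = (2 - 2 / (n : ℝ)) * primeNorm n x ^ ((2 - 2 / (n : ℝ)) - 2) *
        (1 - lastCoord n hn x ^ 2) ^ (-α) * x i := by
  simp only [gradPog, PiLp.toLp_apply]
  rw [if_neg hi]

-- the "s" value of the gradient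
lemma gradPog_primeNorm (n : ℕ) (hn : 3 ≤ n) (α : ℝ) (hγ : 0 < 2 - 2 / (n : ℝ))
    (x : EuclideanSpace ℝ (Fin n)) (hx : x ∈ XPog n hn) (hx' : primeNorm n x ≠ 0) :
    primeNorm n (gradPog n hn α x)
      = (2 - 2 / (n : ℝ)) * primeNorm n x ^ ((2 - 2 / (n : ℝ)) - 1) *
        (1 - lastCoord n hn x ^ 2) ^ (-α) := by
  set γ : ℝ := 2 - 2 / (n : ℝ)
  set t : ℝ := lastCoord n hn x
  set r : ℝ := primeNorm n x
  have hrpos : 0 < r := lt_of_le_of_ne (primeNorm_nonneg n x) (Ne.symm hx')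
  have hw : (0:ℝ) < 1 - t ^ 2 := by nlinarith [hx.1, hx.2]
  set c : ℝ := γ * r ^ (γ - 2) * (1 - t ^ 2) ^ (-α) with hc
  have hcpos : 0 < c :=
    mul_pos (mul_pos hγ (Real.rpow_pos_of_pos hrpos _)) (Real.rpow_pos_of_pos hw _)
  have hsc := primeNorm_scale n c x (gradPog n hn α x)
    (fun i hi => gradPog_other n hn α x i hi)
  rw [hsc, abs_of_pos hcpos, hc]
  have : r ^ (γ - 2) * r = r ^ (γ - 1) := by
    rw [← Real.rpow_add_one hrpos.ne' (γ - 2)]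
    congr 1
    ring
  calc γ * r ^ (γ - 2) * (1 - t ^ 2) ^ (-α) * r
      = γ * (r ^ (γ - 2) * r) * (1 - t ^ 2) ^ (-α) := by ring
    _ = γ * r ^ (γ - 1) * (1 - t ^ 2) ^ (-α) := by rw [this]

lemma bijon_grad (n : ℕ) (hn : 3 ≤ n) (α : ℝ) (hα0 : 0 < α)
    (hα1 : α < (2 - 2 / (n : ℝ)) - 1) :
    Set.BijOn (gradPog n hn α) {x ∈ XPog n hn | primeNorm n x ≠ 0}
      {y : EuclideanSpace ℝ (Fin n) | ∃ i : Fin n, (i : ℕ) ≠ n - 1 ∧ y i ≠ 0} := by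
  set γ : ℝ := 2 - 2 / (n : ℝ) with hγdef
  have hγ : 1 < γ := by linarith
  have hγ0 : 0 < γ := by linarith
  -- maps to
  have hmaps : Set.MapsTo (gradPog n hn α) {x ∈ XPog n hn | primeNorm n x ≠ 0}
      {y : EuclideanSpace ℝ (Fin n) | ∃ i : Fin n, (i : ℕ) ≠ n - 1 ∧ y i ≠ 0} := by
    rintro x ⟨hx, hx'⟩
    have hrpos : 0 < primeNorm n x := lt_of_le_of_ne (primeNorm_nonneg n x) (Ne.symm hx')
    have hw : (0:ℝ) < 1 - lastCoord n hn x ^ 2 := by nlinarith [hx.1, hx.2]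
    obtain ⟨i, hi, hxi⟩ : ∃ i : Fin n, (i : ℕ) ≠ n - 1 ∧ x i ≠ 0 := by
      by_contra h
      push_neg at h
      exact hx' ((primeNorm_eq_zero_iff n x).mpr (fun i hi => h i hi))
    refine ⟨i, hi, ?_⟩
    rw [gradPog_other n hn α x i hi]
    have h1 : (0:ℝ) < γ * primeNorm n x ^ (γ - 2) * (1 - lastCoord n hn x ^ 2) ^ (-α) :=
      mul_pos (mul_pos hγ0 (Real.rpow_pos_of_pos hrpos _)) (Real.rpow_pos_of_pos hw _)
    exact mul_ne_zero h1.ne' hxi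
  -- key data for a point of the domain
  have hdata : ∀ x ∈ {x ∈ XPog n hn | primeNorm n x ≠ 0},
      (0 < primeNorm n x ∧ lastCoord n hn x ∈ Set.Ioo (-1:ℝ) 1) ∧
      γ * primeNorm n x ^ (γ - 1) * (1 - lastCoord n hn x ^ 2) ^ (-α)
        = primeNorm n (gradPog n hn α x) ∧
      2 * α * primeNorm n x ^ γ * lastCoord n hn x *
          (1 - lastCoord n hn x ^ 2) ^ (-(α + 1))
        = gradPog n hn α x ⟨n - 1, by omega⟩ := by
    rintro x ⟨hx, hx'⟩
    refine ⟨⟨lt_of_le_of_ne (primeNorm_nonneg n x) (Ne.symm hx'), hx⟩, ?_, ?_⟩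
    · rw [gradPog_primeNorm n hn α hγ0 x hx hx']
    · rw [gradPog_last n hn α x]
  constructor
  · exact hmaps
  constructor
  · -- injectivity
    rintro x hx z hz hxz
    have hdx := hdata x hx
    have hdz := hdata z hz
    have hs : primeNorm n (gradPog n hn α x) = primeNorm n (gradPog n hn α z) := by
      rw [hxz]
    have hspos : 0 < primeNorm n (gradPog n hn α x) := by
      rcases hmaps hx with ⟨i, hi, hyi⟩
      refine lt_of_le_of_ne (primeNorm_nonneg n _) (Ne.symm ?_)
      intro h0
      exact hyi ((primeNorm_eq_zero_iff n _).mp h0 i hi)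
    have hb : gradPog n hn α x ⟨n - 1, by omega⟩ = gradPog n hn α z ⟨n - 1, by omega⟩ := by
      rw [hxz]
    obtain ⟨p, _, hpuniq⟩ := solve_unique' hγ hα0 (by rw [hγdef] at hα1 ⊢; exact hα1) hspos
      (gradPog n hn α x ⟨n - 1, by omega⟩)
    have h1 := hpuniq (primeNorm n x, lastCoord n hn x)
      ⟨hdx.1, hdx.2.1, hdx.2.2⟩
    have h2 := hpuniq (primeNorm n z, lastCoord n hn z)
      ⟨hdz.1, by rw [hdz.2.1, ← hs], by rw [hdz.2.2, ← hb]⟩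
    have heq := h1.trans h2.symm
    have hreq : primeNorm n x = primeNorm n z := congrArg Prod.fst heq
    have hteq : lastCoord n hn x = lastCoord n hn z := congrArg Prod.snd heq
    -- deduce coordinatewise equality
    ext i
    by_cases hi : (i : ℕ) = n - 1
    · have hiN : i = (⟨n - 1, by omega⟩ : Fin n) := Fin.ext hi
      rw [hiN]
      exact hteq
    · have h3 := congrArg (fun v : EuclideanSpace ℝ (Fin n) => v i) hxz
      rw [gradPog_other n hn α x i hi, gradPog_other n hn α z i hi] at h3
      have hrpos := (hdata x hx).1.1
      have hwx : (0:ℝ) < 1 - lastCoord n hn x ^ 2 := by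
        have h := (hdata x hx).1.2; nlinarith [h.1, h.2]
      have hc : (0:ℝ) < γ * primeNorm n x ^ (γ - 2) * (1 - lastCoord n hn x ^ 2) ^ (-α) :=
        mul_pos (mul_pos hγ0 (Real.rpow_pos_of_pos hrpos _)) (Real.rpow_pos_of_pos hwx _)
      rw [← hreq, ← hteq] at h3
      exact mul_left_cancel₀ hc.ne' h3
  · -- surjectivity
    rintro y ⟨i₀, hi₀, hyi₀⟩
    have hspos : 0 < primeNorm n y := by
      refine lt_of_le_of_ne (primeNorm_nonneg n y) (Ne.symm ?_)
      intro h0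
      exact hyi₀ ((primeNorm_eq_zero_iff n y).mp h0 i₀ hi₀)
    set s : ℝ := primeNorm n y with hsdef
    obtain ⟨⟨r, t⟩, ⟨⟨hrpos, htIoo⟩, hE1, hE2⟩, -⟩ :=
      solve_unique' hγ hα0 (by rw [hγdef] at hα1 ⊢; exact hα1) hspos (y ⟨n - 1, by omega⟩)
    set x : EuclideanSpace ℝ (Fin n) :=
      WithLp.toLp 2 (fun i => if (i : ℕ) = n - 1 then t else (r / s) * y i : Fin n → ℝ) with hxdef
    have hxlast : lastCoord n hn x = t := by
      show (if ((⟨n - 1, by omega⟩ : Fin n) : ℕ) = n - 1 then t else _) = t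
      rw [if_pos rfl]
    have hxother : ∀ i : Fin n, (i : ℕ) ≠ n - 1 → x i = (r / s) * y i := by
      intro i hi
      show (if (i : ℕ) = n - 1 then t else (r / s) * y i) = _
      rw [if_neg hi]
    have hxpn : primeNorm n x = r := by
      rw [primeNorm_scale n (r / s) y x hxother,
        abs_of_pos (div_pos hrpos hspos), ← hsdef, div_mul_cancel₀ _ hspos.ne']
    have hxX : x ∈ XPog n hn := by
      show lastCoord n hn x ∈ Set.Ioo (-1:ℝ) 1
      rw [hxlast]; exact htIoo
    have hw : (0:ℝ) < 1 - t ^ 2 := by nlinarith [htIoo.1, htIoo.2]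
    refine ⟨x, ⟨hxX, by rw [hxpn]; exact hrpos.ne'⟩, ?_⟩
    ext i
    by_cases hi : (i : ℕ) = n - 1
    · have hiN : i = (⟨n - 1, by omega⟩ : Fin n) := Fin.ext hi
      rw [hiN, gradPog_last n hn α x, hxpn, hxlast]
      exact hE2
    · rw [gradPog_other n hn α x i hi, hxpn, hxlast, hxother i hi]
      have hr1 : r ^ (γ - 2) * r = r ^ (γ - 1) := by
        rw [← Real.rpow_add_one hrpos.ne' (γ - 2)]
        congr 1
        ring
      have : γ * r ^ (γ - 2) * (1 - t ^ 2) ^ (-α) * (r / s * y i)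
          = (γ * r ^ (γ - 1) * (1 - t ^ 2) ^ (-α)) * y i / s := by
        rw [← hr1]; ring
      rw [this, hE1]
      field_simp

lemma gradPog_zero (n : ℕ) (hn : 3 ≤ n) (α : ℝ) (hγ0 : (2 - 2 / (n : ℝ)) ≠ 0)
    (x : EuclideanSpace ℝ (Fin n)) (hx' : primeNorm n x = 0) :
    gradPog n hn α x = 0 := by
  ext i
  by_cases hi : (i : ℕ) = n - 1
  · have hiN : i = (⟨n - 1, by omega⟩ : Fin n) := Fin.ext hi
    rw [hiN, gradPog_last n hn α x, hx', Real.zero_rpow hγ0]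
    show 2 * α * 0 * lastCoord n hn x * (1 - lastCoord n hn x ^ 2) ^ (-(α + 1)) = (0 : EuclideanSpace ℝ (Fin n)) _
    simp
  · rw [gradPog_other n hn α x i hi, (primeNorm_eq_zero_iff n x).mp hx' i hi]
    show _ * (0:ℝ) = (0 : EuclideanSpace ℝ (Fin n)) _
    simp

lemma image_grad (n : ℕ) (hn : 3 ≤ n) (α : ℝ) (hα0 : 0 < α)
    (hα1 : α < (2 - 2 / (n : ℝ)) - 1) :
    gradPog n hn α '' XPog n hn
      = {y : EuclideanSpace ℝ (Fin n) | ∃ i : Fin n, (i : ℕ) ≠ n - 1 ∧ y i ≠ 0} ∪ {0} := by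
  have hγ0 : (2 - 2 / (n : ℝ)) ≠ 0 := by intro h; rw [h] at hα1; linarith
  have hbij := bijon_grad n hn α hα0 hα1
  apply Set.Subset.antisymm
  · rintro y ⟨x, hx, rfl⟩
    by_cases hx' : primeNorm n x = 0
    · right
      rw [gradPog_zero n hn α hγ0 x hx']
      rfl
    · left
      exact hbij.mapsTo ⟨hx, hx'⟩
  · rintro y (hy | hy)
    · obtain ⟨x, hx, hxy⟩ := hbij.surjOn hy
      exact ⟨x, hx.1, hxy⟩
    · refine ⟨0, ?_, ?_⟩
      · show lastCoord n hn 0 ∈ Set.Ioo (-1:ℝ) 1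
        show (0:ℝ) ∈ Set.Ioo (-1:ℝ) 1
        constructor <;> norm_num
      · rw [gradPog_zero n hn α hγ0 0 ((primeNorm_eq_zero_iff n 0).mpr (fun _ _ => rfl))]
        exact hy.symm


/-- **Appendix: gradient computation and gradient image of the Pogorelov-type example.**
For `n ≥ 3`, `γ = 2 − 2/n` and `0 < α < γ − 1`: (a) at points of `X = ℝ^{n−1} × (−1, 1)`
with `x' ≠ 0` the function `u` has the explicit gradient above; (b) at points with
`x' = 0` it is differentiable with vanishing gradient; (c) the gradient restricts to a
bijection from `X̂ = {x ∈ X : x' ≠ 0}` onto `Ŷ = (ℝ^{n−1} \ {0}) × ℝ`, and consequently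
the image of the gradient on `X` is `Ŷ ∪ {0}`. -/
theorem pogorelov_example_gradient
    (n : ℕ) (hn : 3 ≤ n) (α : ℝ) (hα0 : 0 < α) (hα1 : α < (2 - 2 / (n : ℝ)) - 1) :
    (∀ x ∈ XPog n hn, primeNorm n x ≠ 0 →
      HasGradientAt (uPog n hn α) (gradPog n hn α x) x) ∧
    (∀ x ∈ XPog n hn, (∀ i : Fin n, (i : ℕ) ≠ n - 1 → x i = 0) →
      HasGradientAt (uPog n hn α) 0 x) ∧
    Set.BijOn (gradPog n hn α) {x ∈ XPog n hn | primeNorm n x ≠ 0}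
      {y : EuclideanSpace ℝ (Fin n) | ∃ i : Fin n, (i : ℕ) ≠ n - 1 ∧ y i ≠ 0} ∧
    gradPog n hn α '' XPog n hn
      = {y : EuclideanSpace ℝ (Fin n) | ∃ i : Fin n, (i : ℕ) ≠ n - 1 ∧ y i ≠ 0} ∪ {0} := by
  refine ⟨fun x hx hx' => grad_at n hn α x hx hx',
    fun x hx hx0 => grad_zero_at n hn α (by linarith) x hx hx0,
    bijon_grad n hn α hα0 hα1, image_grad n hn α hα0 hα1⟩
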